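/- Let C be a commutative algebra object in an abelian symmetric monoidal category, and suppose the objects D_{≤n}(C) of differential operators of order ≤ n exist. Then the canonical morphism j : D_{≤n}(C) → D_{≤n+1}(C) is a monomorphism. -/

import Mathlib

open CategoryTheory MonoidalCategory

universe v u

/-- `catOrd M n X φ` : the morphism `φ : X ⊗ M.X ⟶ M.X` is an action of `X` on the
algebra object `M` by differential operators of order `≤ n - 1` (so `catOrd M (n+1)`
encodes "order ≤ n").  The inductive step uses
`[φ, μ] = φ ∘ (id_X ⊗ μ) − μ ∘ (id ⊗ φ) ∘ (β ⊗ id) : (X ⊗ M.X) ⊗ M.X ⟶ M.X`. -/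
def catOrd {C : Type u} [Category.{v} C] [Preadditive C] [MonoidalCategory C]
    [BraidedCategory C] (M : Mon C) :
    (n : ℕ) → (X : C) → (X ⊗ M.X ⟶ M.X) → Prop
  | 0, _X, φ => φ = 0
  | n+1, X, φ => catOrd M n (X ⊗ M.X)
      ((α_ X M.X M.X).hom ≫ (X ◁ (MonObj.mul (X := M.X))) ≫ φ
        - ((β_ X M.X).hom ▷ M.X) ≫ (α_ M.X X M.X).hom ≫ (M.X ◁ φ) ≫ (MonObj.mul (X := M.X)))


lemma catOrd_whisker {C : Type u} [Category.{v} C] [Preadditive C] [MonoidalCategory C]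
    [BraidedCategory C] (M : Mon C) :
    ∀ (n : ℕ) (X : C) (φ : X ⊗ M.X ⟶ M.X), catOrd M n X φ →
      ∀ {Y : C} (f : Y ⟶ X), catOrd M n Y ((f ▷ M.X) ≫ φ) := by
  intro n
  induction n with
  | zero => intro X φ h Y f; simp [catOrd] at h ⊢; simp [h]
  | succ n ih =>
    intro X φ h Y f
    have key : (α_ Y M.X M.X).hom ≫ (Y ◁ (MonObj.mul (X := M.X))) ≫ ((f ▷ M.X) ≫ φ)
        - ((β_ Y M.X).hom ▷ M.X) ≫ (α_ M.X Y M.X).hom ≫ (M.X ◁ ((f ▷ M.X) ≫ φ)) ≫ (MonObj.mul (X := M.X))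
        = ((f ▷ M.X) ▷ M.X) ≫
          ((α_ X M.X M.X).hom ≫ (X ◁ (MonObj.mul (X := M.X))) ≫ φ
            - ((β_ X M.X).hom ▷ M.X) ≫ (α_ M.X X M.X).hom ≫ (M.X ◁ φ) ≫ (MonObj.mul (X := M.X))) := by
      simp only [Preadditive.comp_sub]
      congr 1
      · rw [associator_naturality_left_assoc, whisker_exchange_assoc]
      · rw [← Category.assoc ((f ▷ M.X) ▷ M.X), ← comp_whiskerRight,
          BraidedCategory.braiding_naturality_left]
        simp only [comp_whiskerRight, Category.assoc]
        rw [associator_naturality_middle_assoc]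
        simp [MonoidalCategory.whiskerLeft_comp]
    exact (show catOrd M (n+1) Y ((f ▷ M.X) ≫ φ) from by
      simp only [catOrd]
      rw [key]
      exact ih _ _ h (f ▷ M.X))

/-- Let `C` be a (`k`-linear) abelian symmetric monoidal category
and `M` a commutative algebra object in `C`.  Suppose the objects `D n` of
differential operators of order `≤ n` exist, i.e. each `D n` carries a universal
action `ψ n : D n ⊗ M.X ⟶ M.X` of order `≤ n` through which every action of order
`≤ n` factors uniquely.  Then the canonical morphism `j : D n ⟶ D (n+1)`
(the one compatible with the universal actions) is a monomorphism. -/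
theorem stmt_17 {C : Type u} [Category.{v} C] [Abelian C] [MonoidalCategory C]
    [SymmetricCategory C]
    (M : Mon C) (hcomm : (β_ M.X M.X).hom ≫ (MonObj.mul (X := M.X)) = (MonObj.mul (X := M.X)))
    (D : ℕ → C) (ψ : ∀ n : ℕ, D n ⊗ M.X ⟶ M.X)
    (hψ : ∀ n : ℕ, catOrd M (n+1) (D n) (ψ n))
    (huniv : ∀ (n : ℕ) (X : C) (φ : X ⊗ M.X ⟶ M.X), catOrd M (n+1) X φ →
      ∃! f : X ⟶ D n, φ = (f ▷ M.X) ≫ ψ n)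
    (n : ℕ) (j : D n ⟶ D (n+1)) (hj : ψ n = (j ▷ M.X) ≫ ψ (n+1)) :
    Mono j := by
  constructor
  intro T g₁ g₂ hg
  obtain ⟨f, -, huf⟩ := huniv n T ((g₁ ▷ M.X) ≫ ψ n)
    (catOrd_whisker M (n+1) (D n) (ψ n) (hψ n) g₁)
  have h1 : g₁ = f := huf g₁ rfl
  have h2 : g₂ = f := huf g₂ (by
    rw [hj, ← Category.assoc, ← comp_whiskerRight, hg, comp_whiskerRight, Category.assoc])
  rw [h1, h2]
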